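/- arXiv:0906.2763 — 2 statements merged into one kernel-verified Lean document; each statement's English description precedes it below -/
import Mathlib

section
/- For all n ≥ m ≥ 0 and all λ ∈ ℂ, the first moment of the characteristic polynomial of the unrescaled complex sample covariance matrix satisfies E det(λ I_m − X(n,m)* X(n,m)) = (−1)^m · m! · L_m^{(n−m)}(λ). -/
open MeasureTheory ProbabilityTheory Matrix

noncomputable section

/-- The law of a complex random variable whose real and imaginary parts are independent,
each with distribution `Q`. -/
def complexLaw (Q : Measure ℝ) : Measure ℂ :=
  (Q.prod Q).map fun p => (p.1 : ℂ) + p.2 * Complex.I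

/-- The `n × m` upper-left corner matrix built from the doubly-indexed family of entries. -/
def entryMat {Ω : Type*} {𝕜 : Type*} (X : ℕ → ℕ → Ω → 𝕜) (n m : ℕ) (ω : Ω) :
    Matrix (Fin n) (Fin m) 𝕜 :=
  Matrix.of fun i j => X i j ω

/-- The Laguerre polynomial `L_m^{(α)}(x) = ∑_{ν=0}^{m} C(m+α, m−ν) (−x)^ν / ν!`. -/
def laguerre (m α : ℕ) (x : ℂ) : ℂ :=
  ∑ ν ∈ Finset.range (m + 1), ((m + α).choose (m - ν) : ℂ) * (-x) ^ ν / (ν.factorial : ℂ)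

section helpers

variable {Q : Measure ℝ} [IsProbabilityMeasure Q]

lemma integrable_sq (hvar : ∫ x, x ^ 2 ∂Q = 1 / 2) : Integrable (fun x : ℝ => x ^ 2) Q := by
  by_contra h
  rw [integral_undef h] at hvar
  norm_num at hvar

lemma integrable_id'' (hvar : ∫ x, x ^ 2 ∂Q = 1 / 2) : Integrable (fun x : ℝ => x) Q := by
  have h2 := integrable_sq hvar
  refine ((h2.add (integrable_const 1)).mono' measurable_id.aestronglyMeasurable ?_)
  refine Filter.Eventually.of_forall fun x => ?_
  simp only [Real.norm_eq_abs, id, Pi.add_apply]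
  nlinarith [sq_nonneg (|x| - 1), _root_.sq_abs x]

lemma measurable_phi : Measurable (fun p : ℝ × ℝ => (p.1 : ℂ) + p.2 * Complex.I) := by
  fun_prop

lemma integrable_phi (hvar : ∫ x, x ^ 2 ∂Q = 1 / 2) :
    Integrable (fun p : ℝ × ℝ => (p.1 : ℂ) + p.2 * Complex.I) (Q.prod Q) := by
  have habs : Integrable (fun x : ℝ => |x|) Q := (integrable_id'' hvar).abs
  have h1 : Integrable (fun p : ℝ × ℝ => |p.1| * 1) (Q.prod Q) :=
    habs.mul_prod (integrable_const 1)
  have h2 : Integrable (fun p : ℝ × ℝ => 1 * |p.2|) (Q.prod Q) :=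
    (integrable_const 1).mul_prod habs
  refine (h1.add h2).mono' measurable_phi.aestronglyMeasurable
    (Filter.Eventually.of_forall fun p => ?_)
  simp only [Pi.add_apply]
  calc ‖(p.1 : ℂ) + p.2 * Complex.I‖ ≤ ‖(p.1 : ℂ)‖ + ‖(p.2 : ℂ) * Complex.I‖ := norm_add_le _ _
    _ ≤ |p.1| * 1 + 1 * |p.2| := by simp


lemma integral_ofReal' {μ : Measure ℝ} (f : ℝ → ℝ) :
    ∫ x, (f x : ℂ) ∂μ = ((∫ x, f x ∂μ : ℝ) : ℂ) := by
  simp only [← Complex.ofRealCLM_apply]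
  by_cases hf : Integrable f μ
  · exact ContinuousLinearMap.integral_comp_comm _ hf
  · rw [integral_undef hf, integral_undef]
    · simp
    · intro h
      exact hf (by simpa using h.re)

lemma integral_cLaw_id (hmean : ∫ x, x ∂Q = 0) (hvar : ∫ x, x ^ 2 ∂Q = 1 / 2) :
    ∫ z, z ∂(complexLaw Q) = 0 := by
  rw [complexLaw, integral_map measurable_phi.aemeasurable (f := fun z : ℂ => z)
    aestronglyMeasurable_id]
  have h1 : Integrable (fun p : ℝ × ℝ => (p.1 : ℂ) * 1) (Q.prod Q) :=
    ((integrable_id'' hvar).ofReal (𝕜 := ℂ)).mul_prod (integrable_const 1)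
  have h2 : Integrable (fun p : ℝ × ℝ => (1 : ℂ) * (p.2 * Complex.I)) (Q.prod Q) :=
    (integrable_const 1).mul_prod (((integrable_id'' hvar).ofReal (𝕜 := ℂ)).mul_const Complex.I)
  rw [integral_congr_ae (Filter.Eventually.of_forall
    (fun p : ℝ × ℝ => by ring :
      ∀ p : ℝ × ℝ, ((p.1 : ℂ) + p.2 * Complex.I) = (p.1 : ℂ) * 1 + (1 : ℂ) * (p.2 * Complex.I)))]
  rw [integral_add h1 h2,
    integral_prod_mul (f := fun x : ℝ => (x : ℂ)) (g := fun _ : ℝ => (1 : ℂ)),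
    integral_prod_mul (f := fun _ : ℝ => (1 : ℂ)) (g := fun y : ℝ => (y : ℂ) * Complex.I)]
  rw [integral_ofReal' (fun x => x), hmean]
  rw [integral_mul_const, integral_ofReal' (fun x => x), hmean]
  simp

lemma key_normSq (p : ℝ × ℝ) :
    (starRingEnd ℂ) ((p.1 : ℂ) + p.2 * Complex.I) * ((p.1 : ℂ) + p.2 * Complex.I)
      = ((p.1 ^ 2 : ℝ) : ℂ) * 1 + (1 : ℂ) * ((p.2 ^ 2 : ℝ) : ℂ) := by
  simp only [map_add, _root_.map_mul, Complex.conj_ofReal, Complex.conj_I]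
  push_cast
  linear_combination (-(p.2 : ℂ) ^ 2) * Complex.I_sq

lemma measurable_conj_mul : Measurable (fun z : ℂ => (starRingEnd ℂ) z * z) :=
  (Complex.continuous_conj.mul continuous_id).measurable

lemma integrable_cLaw_normSq (hvar : ∫ x, x ^ 2 ∂Q = 1 / 2) :
    Integrable (fun z : ℂ => (starRingEnd ℂ) z * z) (complexLaw Q) := by
  rw [complexLaw, integrable_map_measure measurable_conj_mul.aestronglyMeasurable
    measurable_phi.aemeasurable]
  have h1 : Integrable (fun p : ℝ × ℝ => ((p.1 ^ 2 : ℝ) : ℂ) * 1) (Q.prod Q) :=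
    ((integrable_sq hvar).ofReal (𝕜 := ℂ)).mul_prod (integrable_const 1)
  have h2 : Integrable (fun p : ℝ × ℝ => (1 : ℂ) * ((p.2 ^ 2 : ℝ) : ℂ)) (Q.prod Q) :=
    (integrable_const 1).mul_prod ((integrable_sq hvar).ofReal (𝕜 := ℂ))
  have := (h1.add h2).congr (Filter.Eventually.of_forall fun p => (key_normSq p).symm)
  exact this

lemma integral_cLaw_normSq (hvar : ∫ x, x ^ 2 ∂Q = 1 / 2) :
    ∫ z, (starRingEnd ℂ) z * z ∂(complexLaw Q) = 1 := by
  rw [complexLaw, integral_map measurable_phi.aemeasurable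
    measurable_conj_mul.aestronglyMeasurable]
  rw [integral_congr_ae (Filter.Eventually.of_forall key_normSq)]
  have h1 : Integrable (fun p : ℝ × ℝ => ((p.1 ^ 2 : ℝ) : ℂ) * 1) (Q.prod Q) :=
    ((integrable_sq hvar).ofReal (𝕜 := ℂ)).mul_prod (integrable_const 1)
  have h2 : Integrable (fun p : ℝ × ℝ => (1 : ℂ) * ((p.2 ^ 2 : ℝ) : ℂ)) (Q.prod Q) :=
    (integrable_const 1).mul_prod ((integrable_sq hvar).ofReal (𝕜 := ℂ))
  rw [integral_add h1 h2,
    integral_prod_mul (f := fun x : ℝ => ((x ^ 2 : ℝ) : ℂ)) (g := fun _ : ℝ => (1 : ℂ)),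
    integral_prod_mul (f := fun _ : ℝ => (1 : ℂ)) (g := fun y : ℝ => ((y ^ 2 : ℝ) : ℂ))]
  rw [integral_ofReal' (fun x => x ^ 2), hvar]
  norm_num

lemma integrable_cLaw_id (hvar : ∫ x, x ^ 2 ∂Q = 1 / 2) :
    Integrable (fun z : ℂ => z) (complexLaw Q) := by
  rw [complexLaw]
  exact (integrable_map_measure aestronglyMeasurable_id
    measurable_phi.aemeasurable).mpr (integrable_phi hvar)

section omega
variable {Ω : Type} [MeasureSpace Ω] [IsProbabilityMeasure (ℙ : Measure Ω)]
  {X : ℕ → ℕ → Ω → ℂ}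

lemma X_integrable (hmeas : ∀ i j, Measurable (X i j))
    (hdist : ∀ i j, Measure.map (X i j) ℙ = complexLaw Q)
    (hvar : ∫ x, x ^ 2 ∂Q = 1 / 2) (i j : ℕ) : Integrable (X i j) ℙ := by
  have h : Integrable (fun z : ℂ => z) (Measure.map (X i j) ℙ) := by
    rw [hdist i j]; exact integrable_cLaw_id hvar
  exact (integrable_map_measure aestronglyMeasurable_id (hmeas i j).aemeasurable).mp h

lemma X_conj_integrable (hmeas : ∀ i j, Measurable (X i j))
    (hdist : ∀ i j, Measure.map (X i j) ℙ = complexLaw Q)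
    (hvar : ∫ x, x ^ 2 ∂Q = 1 / 2) (i j : ℕ) :
    Integrable (fun ω => (starRingEnd ℂ) (X i j ω)) ℙ := by
  have h := X_integrable hmeas hdist hvar i j
  exact h.norm.mono' ((Complex.continuous_conj.measurable.comp (hmeas i j)).aestronglyMeasurable)
    (Filter.Eventually.of_forall fun ω => by simp)

lemma X_integral (hmeas : ∀ i j, Measurable (X i j))
    (hdist : ∀ i j, Measure.map (X i j) ℙ = complexLaw Q)
    (hmean : ∫ x, x ∂Q = 0) (hvar : ∫ x, x ^ 2 ∂Q = 1 / 2) (i j : ℕ) :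
    ∫ ω, X i j ω ∂ℙ = 0 := by
  have h := integral_map (μ := (ℙ : Measure Ω)) (hmeas i j).aemeasurable
    (aestronglyMeasurable_id (α := ℂ) (μ := Measure.map (X i j) ℙ))
  rw [hdist i j] at h
  rw [show (fun ω => X i j ω) = X i j from rfl]
  calc ∫ ω, X i j ω ∂ℙ = ∫ z, z ∂(complexLaw Q) := h.symm
    _ = 0 := integral_cLaw_id hmean hvar

lemma X_conj_integral (hmeas : ∀ i j, Measurable (X i j))
    (hdist : ∀ i j, Measure.map (X i j) ℙ = complexLaw Q)
    (hmean : ∫ x, x ∂Q = 0) (hvar : ∫ x, x ^ 2 ∂Q = 1 / 2) (i j : ℕ) :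
    ∫ ω, (starRingEnd ℂ) (X i j ω) ∂ℙ = 0 := by
  rw [integral_conj, X_integral hmeas hdist hmean hvar i j, map_zero]

lemma X_normSq_integrable (hmeas : ∀ i j, Measurable (X i j))
    (hdist : ∀ i j, Measure.map (X i j) ℙ = complexLaw Q)
    (hvar : ∫ x, x ^ 2 ∂Q = 1 / 2) (i j : ℕ) :
    Integrable (fun ω => (starRingEnd ℂ) (X i j ω) * X i j ω) ℙ := by
  have h : Integrable (fun z : ℂ => (starRingEnd ℂ) z * z) (Measure.map (X i j) ℙ) := by
    rw [hdist i j]; exact integrable_cLaw_normSq hvar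
  exact (integrable_map_measure measurable_conj_mul.aestronglyMeasurable
    (hmeas i j).aemeasurable).mp h

lemma X_normSq_integral (hmeas : ∀ i j, Measurable (X i j))
    (hdist : ∀ i j, Measure.map (X i j) ℙ = complexLaw Q)
    (hvar : ∫ x, x ^ 2 ∂Q = 1 / 2) (i j : ℕ) :
    ∫ ω, (starRingEnd ℂ) (X i j ω) * X i j ω ∂ℙ = 1 := by
  have h := integral_map (μ := (ℙ : Measure Ω)) (hmeas i j).aemeasurable
    (measurable_conj_mul.aestronglyMeasurable (μ := Measure.map (X i j) ℙ))
  rw [hdist i j] at h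
  calc ∫ ω, (starRingEnd ℂ) (X i j ω) * X i j ω ∂ℙ
      = ∫ z, (starRingEnd ℂ) z * z ∂(complexLaw Q) := h.symm
    _ = 1 := integral_cLaw_normSq hvar

lemma indep_integral_mul_complex {Ω : Type} [MeasureSpace Ω]
    [IsProbabilityMeasure (ℙ : Measure Ω)] {f g : Ω → ℂ}
    (h : IndepFun f g ℙ) (hf : Measurable f) (hg : Measurable g) :
    ∫ ω, f ω * g ω ∂ℙ = (∫ ω, f ω ∂ℙ) * ∫ ω, g ω ∂ℙ := by
  have hmap := (indepFun_iff_map_prod_eq_prod_map_map hf.aemeasurable hg.aemeasurable).mp h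
  haveI : IsProbabilityMeasure ((ℙ : Measure Ω).map f) := Measure.isProbabilityMeasure_map hf.aemeasurable
  haveI : IsProbabilityMeasure ((ℙ : Measure Ω).map g) := Measure.isProbabilityMeasure_map hg.aemeasurable
  have hpair : AEMeasurable (fun ω => (f ω, g ω)) (ℙ : Measure Ω) :=
    (hf.prodMk hg).aemeasurable
  have hsm : AEStronglyMeasurable (fun p : ℂ × ℂ => p.1 * p.2)
      ((ℙ : Measure Ω).map (fun ω => (f ω, g ω))) :=
    (measurable_fst.mul measurable_snd).aestronglyMeasurable
  calc ∫ ω, f ω * g ω ∂ℙ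
      = ∫ p : ℂ × ℂ, p.1 * p.2 ∂((ℙ : Measure Ω).map (fun ω => (f ω, g ω))) :=
        (integral_map hpair hsm).symm
    _ = ∫ p : ℂ × ℂ, p.1 * p.2 ∂(((ℙ : Measure Ω).map f).prod ((ℙ : Measure Ω).map g)) := by
        rw [hmap]
    _ = (∫ x : ℂ, x ∂((ℙ : Measure Ω).map f)) * ∫ y : ℂ, y ∂((ℙ : Measure Ω).map g) :=
        integral_prod_mul (f := fun x : ℂ => x) (g := fun y : ℂ => y)
    _ = (∫ ω, f ω ∂ℙ) * ∫ ω, g ω ∂ℙ := by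
        have h1 : ∫ x : ℂ, x ∂((ℙ : Measure Ω).map f) = ∫ ω, f ω ∂ℙ :=
          integral_map hf.aemeasurable aestronglyMeasurable_id
        have h2 : ∫ x : ℂ, x ∂((ℙ : Measure Ω).map g) = ∫ ω, g ω ∂ℙ :=
          integral_map hg.aemeasurable aestronglyMeasurable_id
        rw [h1, h2]

lemma pair_fact (hmeas : ∀ i j, Measurable (X i j))
    (hindep : iIndepFun (m := fun _ : ℕ × ℕ => Complex.measurableSpace)
      (fun p ω => X p.1 p.2 ω) ℙ)
    (hdist : ∀ i j, Measure.map (X i j) ℙ = complexLaw Q)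
    (hmean : ∫ x, x ∂Q = 0) (hvar : ∫ x, x ^ 2 ∂Q = 1 / 2) (a b c : ℕ) :
    Integrable (fun ω => (starRingEnd ℂ) (X a c ω) * X b c ω) ℙ ∧
      ∫ ω, (starRingEnd ℂ) (X a c ω) * X b c ω ∂ℙ = (if a = b then (1 : ℂ) else 0) := by
  by_cases hab : a = b
  · subst hab
    simp only [if_pos rfl]
    exact ⟨X_normSq_integrable hmeas hdist hvar a c, X_normSq_integral hmeas hdist hvar a c⟩
  · have hne : ((a, c) : ℕ × ℕ) ≠ (b, c) := by simp [hab]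
    have hpair := hindep.indepFun hne
    have hIndep : IndepFun (fun ω => (starRingEnd ℂ) (X a c ω)) (X b c) ℙ :=
      hpair.comp Complex.continuous_conj.measurable measurable_id
    have h1 := X_conj_integrable hmeas hdist hvar a c
    have h2 := X_integrable hmeas hdist hvar b c
    refine ⟨hIndep.integrable_mul h1 h2, ?_⟩
    simp only [if_neg hab]
    calc ∫ ω, (starRingEnd ℂ) (X a c ω) * X b c ω ∂ℙ
        = (∫ ω, (starRingEnd ℂ) (X a c ω) ∂ℙ) * ∫ ω, X b c ω ∂ℙ :=
          indep_integral_mul_complex hIndep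
            (Complex.continuous_conj.measurable.comp (hmeas a c)) (hmeas b c)
      _ = 0 := by rw [X_conj_integral hmeas hdist hmean hvar a c, zero_mul]

lemma core_prod (hmeas : ∀ i j, Measurable (X i j))
    (hindep : iIndepFun (m := fun _ : ℕ × ℕ => Complex.measurableSpace)
      (fun p ω => X p.1 p.2 ω) ℙ)
    (hdist : ∀ i j, Measure.map (X i j) ℙ = complexLaw Q)
    (hmean : ∫ x, x ∂Q = 0) (hvar : ∫ x, x ^ 2 ∂Q = 1 / 2)
    {κ : Type} [DecidableEq κ] (fv gv cv : κ → ℕ) (hcv : Function.Injective cv)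
    (s : Finset κ) :
    Integrable (fun ω => ∏ j ∈ s, (starRingEnd ℂ) (X (fv j) (cv j) ω) * X (gv j) (cv j) ω) ℙ ∧
      ∫ ω, (∏ j ∈ s, (starRingEnd ℂ) (X (fv j) (cv j) ω) * X (gv j) (cv j) ω) ∂ℙ
        = ∏ j ∈ s, (if fv j = gv j then (1 : ℂ) else 0) := by
  classical
  induction s using Finset.cons_induction with
  | empty => simp
  | cons j₀ s hj₀ ih =>
    set S : Finset (ℕ × ℕ) := {(fv j₀, cv j₀), (gv j₀, cv j₀)} with hS
    set T : Finset (ℕ × ℕ) := s.biUnion (fun j => {(fv j, cv j), (gv j, cv j)}) with hT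
    have hST : Disjoint S T := by
      rw [Finset.disjoint_left]
      intro p hpS hpT
      have hc1 : p.2 = cv j₀ := by
        rw [hS] at hpS
        rcases Finset.mem_insert.mp hpS with h | h
        · rw [h]
        · rw [Finset.mem_singleton.mp h]
      obtain ⟨j, hjs, hjmem⟩ := Finset.mem_biUnion.mp hpT
      have hc2 : p.2 = cv j := by
        rcases Finset.mem_insert.mp hjmem with h | h
        · rw [h]
        · rw [Finset.mem_singleton.mp h]
      exact hj₀ (hcv (hc2.symm.trans hc1) ▸ hjs)
    have hbase := hindep.indepFun_finset S T hST (fun p => hmeas p.1 p.2)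
    have hmemS1 : ((fv j₀, cv j₀) : ℕ × ℕ) ∈ S := by simp [hS]
    have hmemS2 : ((gv j₀, cv j₀) : ℕ × ℕ) ∈ S := by simp [hS]
    set φS : ({p // p ∈ S} → ℂ) → ℂ :=
      fun v => (starRingEnd ℂ) (v ⟨(fv j₀, cv j₀), hmemS1⟩) * v ⟨(gv j₀, cv j₀), hmemS2⟩ with hφS
    have hmφS : Measurable φS := by
      apply Measurable.mul
      · exact Complex.continuous_conj.measurable.comp (measurable_pi_apply _)
      · exact measurable_pi_apply _
    set φT : ({p // p ∈ T} → ℂ) → ℂ :=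
      fun v => ∏ j ∈ s.attach,
        (starRingEnd ℂ) (v ⟨(fv j.1, cv j.1), Finset.mem_biUnion.mpr ⟨j.1, j.2, by simp⟩⟩) *
          v ⟨(gv j.1, cv j.1), Finset.mem_biUnion.mpr ⟨j.1, j.2, by simp⟩⟩ with hφT
    have hmφT : Measurable φT := by
      apply Finset.measurable_prod
      intro j _
      apply Measurable.mul
      · exact Complex.continuous_conj.measurable.comp (measurable_pi_apply _)
      · exact measurable_pi_apply _
    have hIndep : IndepFun
        (fun ω => (starRingEnd ℂ) (X (fv j₀) (cv j₀) ω) * X (gv j₀) (cv j₀) ω)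
        (fun ω => ∏ j ∈ s, (starRingEnd ℂ) (X (fv j) (cv j) ω) * X (gv j) (cv j) ω) ℙ := by
      have h := hbase.comp hmφS hmφT
      have e1 : (φS ∘ fun ω (i : {p // p ∈ S}) => X i.1.1 i.1.2 ω)
          = fun ω => (starRingEnd ℂ) (X (fv j₀) (cv j₀) ω) * X (gv j₀) (cv j₀) ω := rfl
      have e2 : (φT ∘ fun ω (i : {p // p ∈ T}) => X i.1.1 i.1.2 ω)
          = fun ω => ∏ j ∈ s, (starRingEnd ℂ) (X (fv j) (cv j) ω) * X (gv j) (cv j) ω := by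
        funext ω
        exact Finset.prod_attach s fun j => (starRingEnd ℂ) (X (fv j) (cv j) ω) * X (gv j) (cv j) ω
      rw [e1, e2] at h
      exact h
    obtain ⟨hint0, hval0⟩ := pair_fact hmeas hindep hdist hmean hvar (fv j₀) (gv j₀) (cv j₀)
    have hprodint : Integrable (fun ω =>
        ((starRingEnd ℂ) (X (fv j₀) (cv j₀) ω) * X (gv j₀) (cv j₀) ω) *
          ∏ j ∈ s, (starRingEnd ℂ) (X (fv j) (cv j) ω) * X (gv j) (cv j) ω) ℙ :=
      hIndep.integrable_mul hint0 ih.1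
    constructor
    · simpa only [Finset.prod_cons] using hprodint
    · have hm1 : Measurable (fun ω => (starRingEnd ℂ) (X (fv j₀) (cv j₀) ω) *
          X (gv j₀) (cv j₀) ω) :=
        (Complex.continuous_conj.measurable.comp (hmeas _ _)).mul (hmeas _ _)
      have hm2 : Measurable (fun ω =>
          ∏ j ∈ s, (starRingEnd ℂ) (X (fv j) (cv j) ω) * X (gv j) (cv j) ω) := by
        apply Finset.measurable_prod
        intro j _
        exact (Complex.continuous_conj.measurable.comp (hmeas _ _)).mul (hmeas _ _)
      have heq := indep_integral_mul_complex hIndep hm1 hm2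
      calc ∫ ω, ∏ j ∈ Finset.cons j₀ s hj₀,
              (starRingEnd ℂ) (X (fv j) (cv j) ω) * X (gv j) (cv j) ω ∂ℙ
          = ∫ ω, ((starRingEnd ℂ) (X (fv j₀) (cv j₀) ω) * X (gv j₀) (cv j₀) ω) *
              ∏ j ∈ s, (starRingEnd ℂ) (X (fv j) (cv j) ω) * X (gv j) (cv j) ω ∂ℙ := by
            apply integral_congr_ae
            exact Filter.Eventually.of_forall fun ω => Finset.prod_cons hj₀
        _ = (if fv j₀ = gv j₀ then (1 : ℂ) else 0) *
              ∏ j ∈ s, (if fv j = gv j then (1 : ℂ) else 0) := by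
            rw [heq, hval0, ih.2]
        _ = ∏ j ∈ Finset.cons j₀ s hj₀, (if fv j = gv j then (1 : ℂ) else 0) := by
            rw [Finset.prod_cons]

end omega

lemma sum_sign_fix {κ : Type} [Fintype κ] [DecidableEq κ] {n : ℕ} (r : κ → Fin n) :
    (∑ σ : Equiv.Perm κ, if ∀ j, r (σ j) = r j then ((Equiv.Perm.sign σ : ℤ) : ℂ) else 0)
      = if Function.Injective r then 1 else 0 := by
  by_cases hr : Function.Injective r
  · rw [if_pos hr]
    rw [Finset.sum_eq_single (1 : Equiv.Perm κ)]
    · simp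
    · intro σ _ hσ
      rw [if_neg]
      intro h
      exact hσ (Equiv.ext fun x => hr (h x))
    · simp
  · rw [if_neg hr]
    obtain ⟨a, b, hab, hne⟩ := Function.not_injective_iff.mp hr
    apply Finset.sum_ninvolution (g := fun σ => σ * Equiv.swap a b)
    · intro σ
      have hsw : ∀ x, r (Equiv.swap a b x) = r x := by
        intro x
        rcases eq_or_ne x a with rfl | hxa
        · rw [Equiv.swap_apply_left]; exact hab.symm
        rcases eq_or_ne x b with rfl | hxb
        · rw [Equiv.swap_apply_right]; exact hab
        · rw [Equiv.swap_apply_of_ne_of_ne hxa hxb]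
      have hcond : (∀ j, r ((σ * Equiv.swap a b) j) = r j) ↔ (∀ j, r (σ j) = r j) := by
        constructor
        · intro h j
          have := h (Equiv.swap a b j)
          simpa [Equiv.Perm.mul_apply, Equiv.swap_apply_self, hsw] using this
        · intro h j
          simp only [Equiv.Perm.mul_apply]
          rw [h (Equiv.swap a b j), hsw]
      by_cases hc : ∀ j, r (σ j) = r j
      · rw [if_pos hc, if_pos (hcond.mpr hc)]
        rw [Equiv.Perm.sign_mul, Equiv.Perm.sign_swap hne]
        push_cast
        ring
      · rw [if_neg hc, if_neg (fun h => hc (hcond.mp h))]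
        ring
    · intro σ hσ h
      have : Equiv.swap a b = 1 := mul_left_cancel (a := σ) (by simpa using h)
      exact hσ (by rw [if_neg]; intro hc; exact hne (by
        have := Equiv.swap_apply_left a b
        rw [this] at *; exact absurd this.symm (by simp_all)))
    · intro σ; exact Finset.mem_univ _
    · intro σ
      rw [mul_assoc, Equiv.swap_mul_self, mul_one]

lemma sum_inj_count {κ : Type} [Fintype κ] [DecidableEq κ] (n : ℕ) :
    (∑ r : κ → Fin n, if Function.Injective r then (1 : ℂ) else 0)
      = (n.descFactorial (Fintype.card κ) : ℂ) := by
  classical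
  rw [Finset.sum_boole]
  congr 1
  rw [← Fintype.card_subtype]
  rw [Fintype.card_congr (Equiv.subtypeInjectiveEquivEmbedding κ (Fin n))]
  rw [Fintype.card_embedding_eq, Fintype.card_fin]

section omega2
variable {Ω : Type} [MeasureSpace Ω] [IsProbabilityMeasure (ℙ : Measure Ω)]
  {X : ℕ → ℕ → Ω → ℂ}

lemma expected_minor_det (hmeas : ∀ i j, Measurable (X i j))
    (hindep : iIndepFun (m := fun _ : ℕ × ℕ => Complex.measurableSpace)
      (fun p ω => X p.1 p.2 ω) ℙ)
    (hdist : ∀ i j, Measure.map (X i j) ℙ = complexLaw Q)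
    (hmean : ∫ x, x ∂Q = 0) (hvar : ∫ x, x ^ 2 ∂Q = 1 / 2)
    {κ : Type} [Fintype κ] [DecidableEq κ] (cv : κ → ℕ) (hcv : Function.Injective cv)
    (n : ℕ) :
    Integrable (fun ω => (Matrix.of fun j k : κ =>
        ∑ i : Fin n, (starRingEnd ℂ) (X (i : ℕ) (cv j) ω) * X (i : ℕ) (cv k) ω).det) ℙ ∧
      ∫ ω, (Matrix.of fun j k : κ =>
          ∑ i : Fin n, (starRingEnd ℂ) (X (i : ℕ) (cv j) ω) * X (i : ℕ) (cv k) ω).det ∂ℙ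
        = (n.descFactorial (Fintype.card κ) : ℂ) := by
  classical
  -- pointwise expansion of the determinant
  have hpt : ∀ ω, (Matrix.of fun j k : κ =>
      ∑ i : Fin n, (starRingEnd ℂ) (X (i : ℕ) (cv j) ω) * X (i : ℕ) (cv k) ω).det
      = ∑ σ : Equiv.Perm κ, ∑ r : κ → Fin n, ((Equiv.Perm.sign σ : ℤ) : ℂ) *
          ∏ k, (starRingEnd ℂ) (X ((r (σ⁻¹ k)) : ℕ) (cv k) ω) * X ((r k) : ℕ) (cv k) ω := by
    intro ω
    rw [Matrix.det_apply']
    apply Finset.sum_congr rfl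
    intro σ _
    have hrow : ∀ k, (Matrix.of fun j k : κ =>
        ∑ i : Fin n, (starRingEnd ℂ) (X (i : ℕ) (cv j) ω) * X (i : ℕ) (cv k) ω) (σ k) k
        = ∑ i : Fin n, (starRingEnd ℂ) (X (i : ℕ) (cv (σ k)) ω) * X (i : ℕ) (cv k) ω :=
      fun k => rfl
    calc ((Equiv.Perm.sign σ : ℤ) : ℂ) * ∏ k, (Matrix.of fun j k : κ =>
          ∑ i : Fin n, (starRingEnd ℂ) (X (i : ℕ) (cv j) ω) * X (i : ℕ) (cv k) ω) (σ k) k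
        = ((Equiv.Perm.sign σ : ℤ) : ℂ) *
            ∏ k, ∑ i : Fin n, (starRingEnd ℂ) (X (i : ℕ) (cv (σ k)) ω) * X (i : ℕ) (cv k) ω := by
          rw [Finset.prod_congr rfl fun k _ => hrow k]
      _ = ((Equiv.Perm.sign σ : ℤ) : ℂ) * ∑ r ∈ Fintype.piFinset (fun _ : κ => (Finset.univ : Finset (Fin n))),
            ∏ k, (starRingEnd ℂ) (X ((r k) : ℕ) (cv (σ k)) ω) * X ((r k) : ℕ) (cv k) ω := by
          rw [Finset.prod_univ_sum]
      _ = ∑ r : κ → Fin n, ((Equiv.Perm.sign σ : ℤ) : ℂ) *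
            ∏ k, (starRingEnd ℂ) (X ((r k) : ℕ) (cv (σ k)) ω) * X ((r k) : ℕ) (cv k) ω := by
          rw [Fintype.piFinset_univ, Finset.mul_sum]
      _ = ∑ r : κ → Fin n, ((Equiv.Perm.sign σ : ℤ) : ℂ) *
            ∏ k, (starRingEnd ℂ) (X ((r (σ⁻¹ k)) : ℕ) (cv k) ω) * X ((r k) : ℕ) (cv k) ω := by
          apply Finset.sum_congr rfl
          intro r _
          congr 1
          rw [Finset.prod_mul_distrib, Finset.prod_mul_distrib]
          congr 1
          have := Equiv.prod_comp σ
            (fun k => (starRingEnd ℂ) (X ((r (σ⁻¹ k)) : ℕ) (cv k) ω))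
          calc ∏ k, (starRingEnd ℂ) (X ((r k) : ℕ) (cv (σ k)) ω)
              = ∏ k, (starRingEnd ℂ) (X ((r (σ⁻¹ (σ k))) : ℕ) (cv (σ k)) ω) := by
                apply Finset.prod_congr rfl
                intro k _
                rw [Equiv.Perm.inv_def, Equiv.symm_apply_apply]
            _ = ∏ k, (starRingEnd ℂ) (X ((r (σ⁻¹ k)) : ℕ) (cv k) ω) := this
  -- each term is integrable with known integral
  have hterm : ∀ (σ : Equiv.Perm κ) (r : κ → Fin n),
      Integrable (fun ω => ((Equiv.Perm.sign σ : ℤ) : ℂ) *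
        ∏ k, (starRingEnd ℂ) (X ((r (σ⁻¹ k)) : ℕ) (cv k) ω) * X ((r k) : ℕ) (cv k) ω) ℙ ∧
      ∫ ω, ((Equiv.Perm.sign σ : ℤ) : ℂ) *
          ∏ k, (starRingEnd ℂ) (X ((r (σ⁻¹ k)) : ℕ) (cv k) ω) * X ((r k) : ℕ) (cv k) ω ∂ℙ
        = ((Equiv.Perm.sign σ : ℤ) : ℂ) *
            (if ∀ k, r (σ k) = r k then (1 : ℂ) else 0) := by
    intro σ r
    have hcore := core_prod hmeas hindep hdist hmean hvar
      (fun k => ((r (σ⁻¹ k)) : ℕ)) (fun k => ((r k) : ℕ)) cv hcv Finset.univ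
    constructor
    · exact hcore.1.const_mul _
    · rw [integral_const_mul, hcore.2]
      congr 1
      rw [Finset.prod_boole]
      have hiff : (∀ i ∈ Finset.univ, ((r (σ⁻¹ i) : ℕ)) = ((r i : ℕ)))
          ↔ (∀ k, r (σ k) = r k) := by
        constructor
        · intro h k
          have h2 : r (σ⁻¹ (σ k)) = r (σ k) :=
            Fin.val_injective (h (σ k) (Finset.mem_univ _))
          rw [Equiv.Perm.inv_def, Equiv.symm_apply_apply] at h2
          exact h2.symm
        · intro h k _
          have h2 := h (σ⁻¹ k)
          rw [Equiv.Perm.inv_def, Equiv.apply_symm_apply] at h2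
          exact congrArg Fin.val h2.symm
      by_cases h : ∀ k, r (σ k) = r k
      · rw [if_pos (hiff.mpr h), if_pos h]
      · rw [if_neg (fun hh => h (hiff.mp hh)), if_neg h]
  constructor
  · rw [show (fun ω => (Matrix.of fun j k : κ =>
        ∑ i : Fin n, (starRingEnd ℂ) (X (i : ℕ) (cv j) ω) * X (i : ℕ) (cv k) ω).det)
      = fun ω => ∑ σ : Equiv.Perm κ, ∑ r : κ → Fin n, ((Equiv.Perm.sign σ : ℤ) : ℂ) *
          ∏ k, (starRingEnd ℂ) (X ((r (σ⁻¹ k)) : ℕ) (cv k) ω) * X ((r k) : ℕ) (cv k) ω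
      from funext hpt]
    exact integrable_finset_sum _ fun σ _ => integrable_finset_sum _ fun r _ => (hterm σ r).1
  · rw [integral_congr_ae (Filter.Eventually.of_forall hpt)]
    rw [integral_finset_sum _ fun σ _ => integrable_finset_sum _ fun r _ => (hterm σ r).1]
    have : ∀ σ : Equiv.Perm κ,
        (∫ ω, ∑ r : κ → Fin n, ((Equiv.Perm.sign σ : ℤ) : ℂ) *
          ∏ k, (starRingEnd ℂ) (X ((r (σ⁻¹ k)) : ℕ) (cv k) ω) * X ((r k) : ℕ) (cv k) ω ∂ℙ)
        = ∑ r : κ → Fin n, ((Equiv.Perm.sign σ : ℤ) : ℂ) *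
            (if ∀ k, r (σ k) = r k then (1 : ℂ) else 0) := by
      intro σ
      rw [integral_finset_sum _ fun r _ => (hterm σ r).1]
      exact Finset.sum_congr rfl fun r _ => (hterm σ r).2
    rw [Finset.sum_congr rfl fun σ _ => this σ]
    rw [Finset.sum_comm]
    have hrow : ∀ r : κ → Fin n,
        (∑ σ : Equiv.Perm κ, ((Equiv.Perm.sign σ : ℤ) : ℂ) *
          (if ∀ k, r (σ k) = r k then (1 : ℂ) else 0))
        = if Function.Injective r then (1 : ℂ) else 0 := by
      intro r
      rw [← sum_sign_fix r]
      apply Finset.sum_congr rfl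
      intro σ _
      by_cases h : ∀ k, r (σ k) = r k
      · rw [if_pos h, if_pos h, mul_one]
      · rw [if_neg h, if_neg h, mul_zero]
    rw [Finset.sum_congr rfl fun r _ => hrow r]
    exact sum_inj_count n

end omega2

section detpart
variable {m : ℕ}

lemma det_unit_rows (s : Finset (Fin m)) (A : Matrix (Fin m) (Fin m) ℂ) :
    Matrix.det (Matrix.of
        (s.piecewise (fun i => (1 : Matrix (Fin m) (Fin m) ℂ) i) (fun i => A i)))
      = (A.submatrix (fun j : {x : Fin m // x ∉ s} => (j : Fin m))
          (fun j : {x : Fin m // x ∉ s} => (j : Fin m))).det := by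
  classical
  set M := Matrix.of
    (s.piecewise (fun i => (1 : Matrix (Fin m) (Fin m) ℂ) i) (fun i => A i)) with hM
  rw [← Matrix.det_submatrix_equiv_self (Equiv.sumCompl (fun x => x ∈ s)) M]
  have hblocks : M.submatrix (Equiv.sumCompl (fun x => x ∈ s))
        (Equiv.sumCompl (fun x => x ∈ s)) = Matrix.fromBlocks 1 0
      (A.submatrix (fun j : {x // x ∉ s} => (j : Fin m)) (fun j : {x // x ∈ s} => (j : Fin m)))
      (A.submatrix (fun j : {x // x ∉ s} => (j : Fin m))
        (fun j : {x // x ∉ s} => (j : Fin m))) := by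
    have hmem : ∀ (i : {x // x ∈ s}) (c : Fin m),
        M (i : Fin m) c = (1 : Matrix (Fin m) (Fin m) ℂ) (i : Fin m) c := by
      intro i c
      rw [hM]
      show (s.piecewise (fun i => (1 : Matrix (Fin m) (Fin m) ℂ) i) (fun i => A i)) i.1 c = _
      rw [Finset.piecewise_eq_of_mem _ _ _ i.2]
    have hnotmem : ∀ (i : {x // x ∉ s}) (c : Fin m), M (i : Fin m) c = A (i : Fin m) c := by
      intro i c
      rw [hM]
      show (s.piecewise (fun i => (1 : Matrix (Fin m) (Fin m) ℂ) i) (fun i => A i)) i.1 c = _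
      rw [Finset.piecewise_eq_of_notMem _ _ _ i.2]
    ext i j
    cases i with
    | inl i =>
      cases j with
      | inl j =>
        rw [Matrix.submatrix_apply, Equiv.sumCompl_apply_inl, Equiv.sumCompl_apply_inl,
          hmem i, Matrix.fromBlocks_apply₁₁, Matrix.one_apply, Matrix.one_apply]
        by_cases hij : i = j
        · rw [if_pos (congrArg _ hij), if_pos hij]
        · rw [if_neg (fun h => hij (Subtype.ext h)), if_neg hij]
      | inr j =>
        rw [Matrix.submatrix_apply, Equiv.sumCompl_apply_inl, Equiv.sumCompl_apply_inr,
          hmem i, Matrix.fromBlocks_apply₁₂, Matrix.one_apply, Matrix.zero_apply]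
        rw [if_neg]
        intro h
        exact j.2 (h ▸ i.2)
    | inr i =>
      cases j with
      | inl j =>
        rw [Matrix.submatrix_apply, Equiv.sumCompl_apply_inr, Equiv.sumCompl_apply_inl,
          hnotmem i, Matrix.fromBlocks_apply₂₁, Matrix.submatrix_apply]
      | inr j =>
        rw [Matrix.submatrix_apply, Equiv.sumCompl_apply_inr, Equiv.sumCompl_apply_inr,
          hnotmem i, Matrix.fromBlocks_apply₂₂, Matrix.submatrix_apply]
  rw [hblocks, Matrix.det_fromBlocks_zero₁₂, Matrix.det_one, one_mul]

lemma det_expand (lam : ℂ) (A : Matrix (Fin m) (Fin m) ℂ) :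
    (lam • (1 : Matrix (Fin m) (Fin m) ℂ) - A).det
      = ∑ s : Finset (Fin m), lam ^ s.card * (-1 : ℂ) ^ (m - s.card) *
          (A.submatrix (fun j : {x : Fin m // x ∉ s} => (j : Fin m))
            (fun j : {x : Fin m // x ∉ s} => (j : Fin m))).det := by
  classical
  have h0 : (lam • (1 : Matrix (Fin m) (Fin m) ℂ) - A)
      = Matrix.of ((fun i => lam • (1 : Matrix (Fin m) (Fin m) ℂ) i)
          + (fun i => (-1 : ℂ) • A i)) := by
    ext i j
    simp [Matrix.sub_apply, Matrix.smul_apply, smul_eq_mul]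
    ring
  rw [h0]
  have hdet : ∀ v : Fin m → (Fin m → ℂ), Matrix.det (Matrix.of v)
      = Matrix.detRowAlternating.toMultilinearMap v := fun v => rfl
  rw [hdet]
  rw [MultilinearMap.map_add_univ]
  apply Finset.sum_congr rfl
  intro s _
  -- peel off the lam factors
  have h1 : s.piecewise (fun i => lam • (1 : Matrix (Fin m) (Fin m) ℂ) i)
        (fun i => (-1 : ℂ) • A i)
      = s.piecewise
          (fun i => lam • (s.piecewise (fun i => (1 : Matrix (Fin m) (Fin m) ℂ) i)
            (fun i => (-1 : ℂ) • A i)) i)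
          (s.piecewise (fun i => (1 : Matrix (Fin m) (Fin m) ℂ) i)
            (fun i => (-1 : ℂ) • A i)) := by
    funext i
    by_cases hi : i ∈ s
    · rw [Finset.piecewise_eq_of_mem _ _ _ hi, Finset.piecewise_eq_of_mem _ _ _ hi,
        Finset.piecewise_eq_of_mem _ _ _ hi]
    · rw [Finset.piecewise_eq_of_notMem _ _ _ hi, Finset.piecewise_eq_of_notMem _ _ _ hi,
        Finset.piecewise_eq_of_notMem _ _ _ hi]
  rw [h1, MultilinearMap.map_piecewise_smul, Finset.prod_const]
  -- now peel off the (-1) factors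
  have h2 : s.piecewise (fun i => (1 : Matrix (Fin m) (Fin m) ℂ) i) (fun i => (-1 : ℂ) • A i)
      = sᶜ.piecewise
          (fun i => (-1 : ℂ) • (s.piecewise (fun i => (1 : Matrix (Fin m) (Fin m) ℂ) i)
            (fun i => A i)) i)
          (s.piecewise (fun i => (1 : Matrix (Fin m) (Fin m) ℂ) i) (fun i => A i)) := by
    funext i
    by_cases hi : i ∈ s
    · have hi' : i ∉ sᶜ := by simp [hi]
      rw [Finset.piecewise_eq_of_mem _ _ _ hi, Finset.piecewise_eq_of_notMem _ _ _ hi',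
        Finset.piecewise_eq_of_mem _ _ _ hi]
    · have hi' : i ∈ sᶜ := by simp [hi]
      rw [Finset.piecewise_eq_of_notMem _ _ _ hi, Finset.piecewise_eq_of_mem _ _ _ hi',
        Finset.piecewise_eq_of_notMem _ _ _ hi]
  rw [h2, MultilinearMap.map_piecewise_smul, Finset.prod_const]
  rw [Finset.card_compl, Fintype.card_fin]
  have h3 : Matrix.detRowAlternating.toMultilinearMap
      (s.piecewise (fun i => (1 : Matrix (Fin m) (Fin m) ℂ) i) (fun i => A i))
      = (A.submatrix (fun j : {x : Fin m // x ∉ s} => (j : Fin m))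
          (fun j : {x : Fin m // x ∉ s} => (j : Fin m))).det := det_unit_rows s A
  rw [h3, smul_eq_mul, smul_eq_mul]
  ring

end detpart

lemma nat_id {n m j : ℕ} (hj : j ≤ m) :
    m.choose j * n.descFactorial (m - j) * j.factorial
      = m.factorial * n.choose (m - j) := by
  rw [Nat.descFactorial_eq_factorial_mul_choose, ← Nat.choose_mul_factorial_mul_factorial hj]
  ring


end helpers

/-- For `n ≥ m ≥ 0` and `λ ∈ ℂ`,
`E det(λ I_m − X(n,m)* X(n,m)) = (−1)^m · m! · L_m^{(n−m)}(λ)`. -/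
theorem expected_charpoly_complex_sample_covariance
    (Q : Measure ℝ) [IsProbabilityMeasure Q] (b : ℝ)
    (hmean : ∫ x, x ∂Q = 0) (hvar : ∫ x, x ^ 2 ∂Q = 1 / 2) (hfourth : ∫ x, x ^ 4 ∂Q = b)
    (Ω : Type) [MeasureSpace Ω] [IsProbabilityMeasure (ℙ : Measure Ω)]
    (X : ℕ → ℕ → Ω → ℂ) (hmeas : ∀ i j, Measurable (X i j))
    (hindep : iIndepFun (m := fun _ : ℕ × ℕ => Complex.measurableSpace)
      (fun p ω => X p.1 p.2 ω) ℙ)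
    (hdist : ∀ i j, Measure.map (X i j) ℙ = complexLaw Q) :
    ∀ n m : ℕ, m ≤ n → ∀ lam : ℂ,
      (∫ ω, (lam • (1 : Matrix (Fin m) (Fin m) ℂ)
          - (entryMat X n m ω)ᴴ * entryMat X n m ω).det ∂ℙ)
        = (-1) ^ m * (m.factorial : ℂ) * laguerre m (n - m) lam := by
  simp only [laguerre]
  classical
  intro n m hnm lam
  have hsub : ∀ (ω : Ω) (s : Finset (Fin m)),
      (((entryMat X n m ω)ᴴ * entryMat X n m ω).submatrix
          (fun j : {x : Fin m // x ∉ s} => (j : Fin m))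
          (fun j : {x : Fin m // x ∉ s} => (j : Fin m)))
        = Matrix.of fun j k : {x : Fin m // x ∉ s} =>
            ∑ i : Fin n, (starRingEnd ℂ) (X (i : ℕ) (((j : Fin m)) : ℕ) ω) *
              X (i : ℕ) (((k : Fin m)) : ℕ) ω := by
    intro ω s
    ext j k
    simp only [Matrix.submatrix_apply, Matrix.mul_apply, Matrix.conjTranspose_apply,
      entryMat, Matrix.of_apply, starRingEnd_apply]
  have hcard : ∀ s : Finset (Fin m),
      Fintype.card {x : Fin m // x ∉ s} = m - s.card := by
    intro s
    have := Fintype.card_subtype_compl (p := fun x : Fin m => x ∈ s)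
    simpa [Fintype.card_coe, Fintype.card_fin] using this
  have hminor := fun s : Finset (Fin m) =>
    expected_minor_det (Q := Q) hmeas hindep hdist hmean hvar
      (fun j : {x : Fin m // x ∉ s} => (((j : Fin m)) : ℕ))
      (fun a b hab => Subtype.ext (Fin.val_injective hab)) n
  have hpt : ∀ ω : Ω, (lam • (1 : Matrix (Fin m) (Fin m) ℂ)
        - (entryMat X n m ω)ᴴ * entryMat X n m ω).det
      = ∑ s : Finset (Fin m), lam ^ s.card * (-1 : ℂ) ^ (m - s.card) *
          (Matrix.of fun j k : {x : Fin m // x ∉ s} =>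
            ∑ i : Fin n, (starRingEnd ℂ) (X (i : ℕ) (((j : Fin m)) : ℕ) ω) *
              X (i : ℕ) (((k : Fin m)) : ℕ) ω).det := by
    intro ω
    rw [det_expand]
    exact Finset.sum_congr rfl fun s _ => by rw [hsub ω s]
  rw [integral_congr_ae (Filter.Eventually.of_forall hpt)]
  rw [integral_finset_sum _ (fun s _ => ((hminor s).1.const_mul _))]
  have hval : ∀ s : Finset (Fin m),
      (∫ ω, lam ^ s.card * (-1 : ℂ) ^ (m - s.card) *
        (Matrix.of fun j k : {x : Fin m // x ∉ s} =>
          ∑ i : Fin n, (starRingEnd ℂ) (X (i : ℕ) (((j : Fin m)) : ℕ) ω) *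
            X (i : ℕ) (((k : Fin m)) : ℕ) ω).det ∂ℙ)
      = lam ^ s.card * (-1 : ℂ) ^ (m - s.card) *
          (n.descFactorial (m - s.card) : ℂ) := by
    intro s
    rw [integral_const_mul, (hminor s).2, hcard s]
  rw [Finset.sum_congr rfl fun s _ => hval s]
  -- now a purely combinatorial sum
  have hps : (Finset.univ : Finset (Finset (Fin m)))
      = (Finset.univ : Finset (Fin m)).powerset := (Finset.powerset_univ).symm
  rw [hps, Finset.sum_powerset_apply_card
    (f := fun k => lam ^ k * (-1 : ℂ) ^ (m - k) * (n.descFactorial (m - k) : ℂ))]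
  rw [Finset.card_univ, Fintype.card_fin, Finset.mul_sum]
  apply Finset.sum_congr rfl
  intro k hk
  have hkm : k ≤ m := Nat.lt_succ_iff.mp (Finset.mem_range.mp hk)
  have hmn : m + (n - m) = n := Nat.add_sub_cancel' hnm
  rw [hmn]
  have hfac : (k.factorial : ℂ) ≠ 0 := by
    exact_mod_cast Nat.factorial_ne_zero k
  have hsign2 : (-1 : ℂ) ^ (m - k) = (-1 : ℂ) ^ m * (-1 : ℂ) ^ k := by
    have h : ((-1 : ℂ)) ^ m = (-1 : ℂ) ^ (m - k) * (-1 : ℂ) ^ k := by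
      rw [← pow_add, Nat.sub_add_cancel hkm]
    rw [h, mul_assoc, ← pow_add, ← two_mul, pow_mul, neg_one_sq, one_pow, mul_one]
  have hnat : (m.choose k : ℂ) * (n.descFactorial (m - k) : ℂ) * (k.factorial : ℂ)
      = (m.factorial : ℂ) * (n.choose (m - k) : ℂ) := by
    exact_mod_cast congrArg (Nat.cast (R := ℂ)) (nat_id hkm)
  rw [nsmul_eq_mul, neg_pow lam k, hsign2]
  field_simp
  linear_combination (lam ^ k) * hnat
end
end

section
/- For all n ≥ m ≥ 0 and all λ ∈ ℂ, the first moment of the characteristic polynomial of the unrescaled real sample covariance matrix satisfies E det(λ I_m − X(n,m)ᵀ X(n,m)) = (−1)^m · m! · L_m^{(n−m)}(λ). -/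
open MeasureTheory ProbabilityTheory Matrix

noncomputable section

/-- The `n × m` upper-left corner complex matrix built from a doubly-indexed family of real
entries. -/
def entryMatC {Ω : Type*} (X : ℕ → ℕ → Ω → ℝ) (n m : ℕ) (ω : Ω) :
    Matrix (Fin n) (Fin m) ℂ :=
  Matrix.of fun i j => (X i j ω : ℂ)

section AuxiliaryLemmas

open Finset

variable {Ω : Type} [MeasureSpace Ω] [IsProbabilityMeasure (ℙ : Measure Ω)]

/-- Row selection function for the multilinear expansion of the determinant. -/
def rowF (X : ℕ → ℕ → Ω → ℝ) (lam : ℂ) {n m : ℕ} (ω : Ω) (p : Fin m) :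
    Option (Fin n) → Fin m → ℂ
  | none => fun q => lam * (if p = q then 1 else 0)
  | some i => fun q => -((X i p ω : ℂ) * (X i q ω : ℂ))

/-- The deterministic weight matrix recording the expectation of each selected matrix. -/
def wM (lam : ℂ) {n m : ℕ} (g : Fin m → Option (Fin n)) : Matrix (Fin m) (Fin m) ℂ :=
  Matrix.of fun j q => if g j = none then lam * (if j = q then 1 else 0)
    else -(if g q = g j then 1 else 0)

lemma q_int_sq (Q : Measure ℝ) (hvar : ∫ x, x ^ 2 ∂Q = 1) :
    Integrable (fun x : ℝ => x ^ 2) Q := by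
  by_contra h
  rw [integral_undef h] at hvar
  exact one_ne_zero hvar.symm

lemma q_int_id (Q : Measure ℝ) [IsProbabilityMeasure Q] (hvar : ∫ x, x ^ 2 ∂Q = 1) :
    Integrable (fun x : ℝ => x) Q := by
  have h2 := q_int_sq Q hvar
  refine ((integrable_const (1:ℝ)).add h2).mono' measurable_id.aestronglyMeasurable ?_
  refine Filter.Eventually.of_forall fun x => ?_
  simp only [Real.norm_eq_abs, Pi.add_apply]
  nlinarith [sq_nonneg (|x| - 1), abs_nonneg x, sq_abs x]

lemma momX (Q : Measure ℝ) [IsProbabilityMeasure Q]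
    (hmean : ∫ x, x ∂Q = 0) (hvar : ∫ x, x ^ 2 ∂Q = 1)
    (X : Ω → ℝ) (hm : Measurable X) (hd : Measure.map X ℙ = Q) (k : ℕ) (hk : k ≤ 2) :
    Integrable (fun ω => X ω ^ k) ℙ ∧ (∫ ω, X ω ^ k ∂ℙ) = if k = 1 then 0 else 1 := by
  have hint : ∀ j : ℕ, Integrable (fun x : ℝ => x ^ j) Q → Integrable (fun ω => X ω ^ j) ℙ := by
    intro j hj
    have : Integrable (fun x : ℝ => x ^ j) (Measure.map X ℙ) := by rwa [hd]
    exact ((integrable_map_measure (by rw [hd]; exact hj.aestronglyMeasurable)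
      hm.aemeasurable).mp this)
  have hval : ∀ j : ℕ, (∫ ω, X ω ^ j ∂ℙ) = ∫ x, x ^ j ∂Q := by
    intro j
    rw [← hd]
    exact (integral_map (f := fun x : ℝ => x ^ j) hm.aemeasurable
      (measurable_id.pow_const j).aestronglyMeasurable).symm
  interval_cases k
  · refine ⟨by simpa using integrable_const (1:ℝ), ?_⟩
    simp
  · refine ⟨by simpa using hint 1 (by simpa using q_int_id Q hvar), ?_⟩
    rw [if_pos rfl]
    simpa [hmean] using hval 1
  · refine ⟨hint 2 (q_int_sq Q hvar), ?_⟩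
    rw [if_neg (by norm_num)]
    rw [hval 2, hvar]

lemma prod_moment
    (Q : Measure ℝ) [IsProbabilityMeasure Q]
    (hmean : ∫ x, x ∂Q = 0) (hvar : ∫ x, x ^ 2 ∂Q = 1)
    (X : ℕ → ℕ → Ω → ℝ) (hmeas : ∀ i j, Measurable (X i j))
    (hindep : iIndepFun (m := fun _ : ℕ × ℕ => Real.measurableSpace) (fun p ω => X p.1 p.2 ω) ℙ)
    (hdist : ∀ i j, Measure.map (X i j) ℙ = Q)
    (k : ℕ × ℕ → ℕ) (hk : ∀ e, k e ≤ 2) :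
    ∀ t : Finset (ℕ × ℕ),
      Integrable (fun ω => ∏ e ∈ t, X e.1 e.2 ω ^ k e) ℙ ∧
      (∫ ω, ∏ e ∈ t, X e.1 e.2 ω ^ k e ∂ℙ) = ∏ e ∈ t, (if k e = 1 then (0:ℝ) else 1) := by
  have hZindep : iIndepFun (m := fun _ : ℕ × ℕ => Real.measurableSpace)
      (fun e ω => X e.1 e.2 ω ^ k e) ℙ :=
    hindep.comp (fun e (x : ℝ) => x ^ k e) (fun e => measurable_id.pow_const _)
  have hZmeas : ∀ e : ℕ × ℕ, Measurable (fun ω => X e.1 e.2 ω ^ k e) :=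
    fun e => (hmeas _ _).pow_const _
  have hmom := fun (e : ℕ × ℕ) => momX Q hmean hvar (X e.1 e.2) (hmeas _ _) (hdist _ _) (k e) (hk e)
  intro t
  induction t using Finset.induction with
  | empty => exact ⟨by simpa using integrable_const (1:ℝ), by simp⟩
  | @insert e t he ih =>
      have hprodfn : (∏ e' ∈ t, fun ω => X e'.1 e'.2 ω ^ k e') = fun ω => ∏ e' ∈ t, X e'.1 e'.2 ω ^ k e' := by
        funext ω; simp
      have hind : IndepFun (fun ω => X e.1 e.2 ω ^ k e)
          (fun ω => ∏ e' ∈ t, X e'.1 e'.2 ω ^ k e') ℙ := by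
        have h := hZindep.indepFun_finsetProd_of_notMem hZmeas he
        rw [hprodfn] at h
        exact h.symm
      have hmul : (fun ω => ∏ e' ∈ insert e t, X e'.1 e'.2 ω ^ k e')
          = (fun ω => X e.1 e.2 ω ^ k e) * (fun ω => ∏ e' ∈ t, X e'.1 e'.2 ω ^ k e') := by
        funext ω; simp [Finset.prod_insert he]
      constructor
      · rw [hmul]
        exact hind.integrable_mul (hmom e).1 ih.1
      · rw [hmul, Finset.prod_insert he, ← (hmom e).2, ← ih.2]
        exact hind.integral_mul_eq_mul_integral (hmom e).1.aestronglyMeasurable ih.1.aestronglyMeasurable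

lemma mono_moment
    (Q : Measure ℝ) [IsProbabilityMeasure Q]
    (hmean : ∫ x, x ∂Q = 0) (hvar : ∫ x, x ^ 2 ∂Q = 1)
    (X : ℕ → ℕ → Ω → ℝ) (hmeas : ∀ i j, Measurable (X i j))
    (hindep : iIndepFun (m := fun _ : ℕ × ℕ => Real.measurableSpace) (fun p ω => X p.1 p.2 ω) ℙ)
    (hdist : ∀ i j, Measure.map (X i j) ℙ = Q)
    {M : ℕ} (s : Finset (Fin M)) (a b : Fin M → ℕ × ℕ)
    (ha : Set.InjOn a s) (hb : Set.InjOn b s) :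
    Integrable (fun ω => ∏ j ∈ s, X (a j).1 (a j).2 ω * X (b j).1 (b j).2 ω) ℙ ∧
    ((∃ j₀ ∈ s, ∀ j' ∈ s, a j' ≠ b j₀) →
      (∫ ω, ∏ j ∈ s, X (a j).1 (a j).2 ω * X (b j).1 (b j).2 ω ∂ℙ) = 0) := by
  classical
  set t : Finset (ℕ × ℕ) := s.image a ∪ s.image b with ht
  have hcard : ∀ (c : Fin M → ℕ × ℕ), Set.InjOn c s → ∀ e : ℕ × ℕ,
      (s.filter fun j => c j = e).card ≤ 1 := by
    intro c hc e
    refine Finset.card_le_one.mpr fun x hx y hy => ?_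
    simp only [Finset.mem_filter] at hx hy
    exact hc hx.1 hy.1 (hx.2.trans hy.2.symm)
  set ka : ℕ × ℕ → ℕ := fun e => (s.filter fun j => a j = e).card with hka
  set kb : ℕ × ℕ → ℕ := fun e => (s.filter fun j => b j = e).card with hkb
  have hk2 : ∀ e, ka e + kb e ≤ 2 := fun e => Nat.add_le_add (hcard a ha e) (hcard b hb e)
  have hzero : ∀ (c : Fin M → ℕ × ℕ) (e : ℕ × ℕ), e ∉ s.image c →
      (s.filter fun j => c j = e).card = 0 := by
    intro c e he
    rw [Finset.card_eq_zero, Finset.filter_eq_empty_iff]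
    intro j hj hcj
    exact he (hcj ▸ Finset.mem_image_of_mem c hj)
  have hsplit : ∀ (c : Fin M → ℕ × ℕ), (s.image c ⊆ t) → ∀ ω : Ω,
      (∏ j ∈ s, X (c j).1 (c j).2 ω) = ∏ e ∈ t, X e.1 e.2 ω ^ (s.filter fun j => c j = e).card := by
    intro c hsub ω
    rw [Finset.prod_comp (fun e : ℕ × ℕ => X e.1 e.2 ω) c]
    refine Finset.prod_subset hsub ?_
    intro e _ henot
    rw [hzero c e henot, pow_zero]
  have key : (fun ω => ∏ j ∈ s, X (a j).1 (a j).2 ω * X (b j).1 (b j).2 ω)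
      = fun ω => ∏ e ∈ t, X e.1 e.2 ω ^ (ka e + kb e) := by
    funext ω
    rw [Finset.prod_mul_distrib, hsplit a Finset.subset_union_left ω,
      hsplit b Finset.subset_union_right ω, ← Finset.prod_mul_distrib]
    exact Finset.prod_congr rfl fun e _ => (pow_add _ _ _).symm
  have hm := prod_moment Q hmean hvar X hmeas hindep hdist _ hk2 t
  rw [key]
  refine ⟨hm.1, fun hex => ?_⟩
  obtain ⟨j₀, hj₀, hne⟩ := hex
  rw [hm.2]
  refine Finset.prod_eq_zero (Finset.mem_union_right _ (Finset.mem_image_of_mem b hj₀)) ?_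
  rw [if_pos]
  have h1 : ka (b j₀) = 0 := by
    rw [hka, Finset.card_eq_zero, Finset.filter_eq_empty_iff]
    exact fun j hj => hne j hj
  have h2 : kb (b j₀) = 1 := by
    rw [hkb, Finset.card_eq_one]
    refine ⟨j₀, ?_⟩
    ext j
    simp only [Finset.mem_filter, Finset.mem_singleton]
    constructor
    · rintro ⟨hj, hbj⟩; exact hb hj hj₀ hbj
    · rintro rfl; exact ⟨hj₀, rfl⟩
  rw [h1, h2]

open Finset in
lemma det_wM (lam : ℂ) {n m : ℕ} (g : Fin m → Option (Fin n)) :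
    (wM lam g).det = if (∀ p p', g p = g p' → g p = none ∨ p = p')
      then lam ^ (univ.filter fun j => g j = none).card *
        (-1 : ℂ) ^ (univ.filter fun j => ¬ (g j = none)).card
      else 0 := by
  classical
  by_cases h : ∀ p p', g p = g p' → g p = none ∨ p = p'
  · rw [if_pos h]
    have hdiag : wM lam g = Matrix.diagonal (fun j => if g j = none then lam else -1) := by
      ext j q
      rcases eq_or_ne j q with rfl | hne
      · simp [wM, Matrix.diagonal_apply_eq]
      · rw [Matrix.diagonal_apply_ne _ hne]
        by_cases hj : g j = none
        · simp [wM, hj, hne]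
        · have : ¬ (g q = g j) := by
            intro hq
            rcases h q j hq with h1 | h2
            · exact hj (hq ▸ h1)
            · exact hne h2.symm
          simp [wM, hj, this]
    rw [hdiag, Matrix.det_diagonal]
    rw [← Finset.prod_filter_mul_prod_filter_not Finset.univ (fun j => g j = none)]
    rw [Finset.prod_congr rfl (fun j hj => if_pos (Finset.mem_filter.mp hj).2),
      Finset.prod_congr rfl (fun j hj => if_neg (Finset.mem_filter.mp hj).2)]
    simp [Finset.prod_const]
  · rw [if_neg h]
    push_neg at h
    obtain ⟨p, p', hpp', hnone, hne⟩ := h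
    refine Matrix.det_zero_of_row_eq hne ?_
    funext q
    have hnone' : g p' ≠ none := fun hc => hnone (hpp'.trans hc)
    simp only [wM, Matrix.of_apply, if_neg hnone, if_neg hnone', hpp']

lemma det_expand_s4 {Ω : Type} (X : ℕ → ℕ → Ω → ℝ) (lam : ℂ) {n m : ℕ} (ω : Ω) :
    (lam • (1 : Matrix (Fin m) (Fin m) ℂ)
        - (entryMatC X n m ω)ᵀ * entryMatC X n m ω).det
      = ∑ g : Fin m → Option (Fin n),
          (Matrix.of fun p q => rowF X lam ω p (g p) q).det := by
  classical
  have h1 : (lam • (1 : Matrix (Fin m) (Fin m) ℂ)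
      - (entryMatC X n m ω)ᵀ * entryMatC X n m ω)
      = Matrix.of (fun p => ∑ o : Option (Fin n), rowF X lam ω p o) := by
    ext p q
    have : (∑ o : Option (Fin n), rowF X lam ω p o) q
        = ∑ o : Option (Fin n), rowF X lam ω p o q := by
      simp
    simp only [Matrix.of_apply, this, Fintype.sum_option]
    simp [rowF, entryMatC, Matrix.sub_apply, Matrix.smul_apply, Matrix.one_apply,
      Matrix.mul_apply, Matrix.transpose_apply, sub_eq_add_neg, Finset.sum_neg_distrib]
  rw [h1]
  have h2 := MultilinearMap.map_sum (Matrix.detRowAlternating :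
      AlternatingMap ℂ (Fin m → ℂ) ℂ (Fin m)).toMultilinearMap
      (g := fun p (o : Option (Fin n)) => rowF X lam ω p o)
  exact h2

lemma integral_det_g
    (Q : Measure ℝ) [IsProbabilityMeasure Q]
    (hmean : ∫ x, x ∂Q = 0) (hvar : ∫ x, x ^ 2 ∂Q = 1)
    (X : ℕ → ℕ → Ω → ℝ) (hmeas : ∀ i j, Measurable (X i j))
    (hindep : iIndepFun (m := fun _ : ℕ × ℕ => Real.measurableSpace) (fun p ω => X p.1 p.2 ω) ℙ)
    (hdist : ∀ i j, Measure.map (X i j) ℙ = Q)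
    {n m : ℕ} (lam : ℂ) (g : Fin m → Option (Fin n)) :
    Integrable (fun ω => (Matrix.of fun p q => rowF X lam ω p (g p) q).det) ℙ ∧
    (∫ ω, (Matrix.of fun p q => rowF X lam ω p (g p) q).det ∂ℙ) = (wM lam g).det := by
  classical
  set s : Finset (Fin m) := Finset.univ.filter (fun j => ¬ (g j = none)) with hs
  set ι : Fin m → ℕ := fun j => (g j).elim 0 Fin.val with hι
  have hgsome : ∀ j ∈ s, ∃ i : Fin n, g j = some i ∧ (i : ℕ) = ι j := by
    intro j hj
    rcases Option.ne_none_iff_exists'.mp ((Finset.mem_filter.mp hj).2) with ⟨i, hi⟩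
    exact ⟨i, hi, by simp [hι, hi]⟩
  set a : Fin m → ℕ × ℕ := fun j => (ι j, (j : ℕ)) with hadef
  have ha : Set.InjOn a ↑s := fun x _ y _ h => Fin.val_injective (congrArg Prod.snd h)
  have hb : ∀ σ : Equiv.Perm (Fin m),
      Set.InjOn (fun j => (ι j, ((σ j : Fin m) : ℕ))) ↑s := fun σ x _ y _ h =>
    σ.injective (Fin.val_injective (congrArg Prod.snd h))
  set mono : Equiv.Perm (Fin m) → Ω → ℝ :=
    fun σ ω => ∏ j ∈ s, X (ι j) (j : ℕ) ω * X (ι j) ((σ j : Fin m) : ℕ) ω with hmono_def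
  have hmono := fun σ : Equiv.Perm (Fin m) =>
    mono_moment Q hmean hvar X hmeas hindep hdist s a
      (fun j => (ι j, ((σ j : Fin m) : ℕ))) ha (hb σ)
  -- pointwise Leibniz
  have hpt : ∀ ω, (Matrix.of fun p q => rowF X lam ω p (g p) q).det
      = ∑ σ : Equiv.Perm (Fin m), ((Equiv.Perm.sign σ : ℤ) : ℂ) *
          ∏ j, rowF X lam ω j (g j) (σ j) := by
    intro ω
    rw [← Matrix.det_transpose, Matrix.det_apply']
    exact Finset.sum_congr rfl fun σ _ => by
      congr 1
  -- per-σ factorization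
  set c1 : Equiv.Perm (Fin m) → ℂ :=
    fun σ => ∏ j ∈ Finset.univ.filter (fun j => g j = none),
      lam * (if j = σ j then 1 else 0) with hc1
  have hterm : ∀ (σ : Equiv.Perm (Fin m)) (ω : Ω),
      (∏ j, rowF X lam ω j (g j) (σ j))
      = c1 σ * ((-1 : ℂ) ^ s.card * ((mono σ ω : ℝ) : ℂ)) := by
    intro σ ω
    rw [← Finset.prod_filter_mul_prod_filter_not Finset.univ (fun j => g j = none)]
    congr 1
    · exact Finset.prod_congr rfl fun j hj => by
        rw [(Finset.mem_filter.mp hj).2]; rfl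
    · have h1 : ∀ j ∈ s, rowF X lam ω j (g j) (σ j)
          = (-1 : ℂ) * ((X (ι j) (j : ℕ) ω * X (ι j) ((σ j : Fin m) : ℕ) ω : ℝ) : ℂ) := by
        intro j hj
        obtain ⟨i, hi, hival⟩ := hgsome j hj
        rw [hi]
        show -(((X (↑i) (↑j) ω : ℝ) : ℂ) * ((X (↑i) (↑(σ j)) ω : ℝ) : ℂ)) = _
        rw [hival]
        push_cast
        ring
      rw [Finset.prod_congr rfl h1, Finset.prod_mul_distrib, Finset.prod_const,
        ← Complex.ofReal_prod]
  -- integrability of each σ-term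
  have hint : ∀ σ : Equiv.Perm (Fin m),
      Integrable (fun ω => ((Equiv.Perm.sign σ : ℤ) : ℂ) *
        ∏ j, rowF X lam ω j (g j) (σ j)) ℙ := by
    intro σ
    have : (fun ω => ((Equiv.Perm.sign σ : ℤ) : ℂ) * ∏ j, rowF X lam ω j (g j) (σ j))
        = fun ω => (((Equiv.Perm.sign σ : ℤ) : ℂ) * (c1 σ * (-1 : ℂ) ^ s.card))
            * ((mono σ ω : ℝ) : ℂ) := by
      funext ω; rw [hterm σ ω]; ring
    rw [this]
    exact ((hmono σ).1.ofReal).const_mul _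
  have hdet_eq : (fun ω => (Matrix.of fun p q => rowF X lam ω p (g p) q).det)
      = fun ω => ∑ σ : Equiv.Perm (Fin m), ((Equiv.Perm.sign σ : ℤ) : ℂ) *
          ∏ j, rowF X lam ω j (g j) (σ j) := funext hpt
  refine ⟨hdet_eq ▸ integrable_finset_sum _ (fun σ _ => hint σ), ?_⟩
  -- value of each monomial integral
  have hval : ∀ σ : Equiv.Perm (Fin m),
      (∫ ω, mono σ ω ∂ℙ) = if (∀ j ∈ s, g (σ j) = g j) then (1:ℝ) else 0 := by
    intro σ
    by_cases h : ∀ j ∈ s, g (σ j) = g j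
    · rw [if_pos h]
      have hιs : ∀ j ∈ s, ι (σ j) = ι j := fun j hj =>
        congrArg (fun o : Option (Fin n) => o.elim 0 Fin.val) (h j hj)
      have hσs : ∀ j ∈ s, σ j ∈ s := by
        intro j hj
        have hj' := (Finset.mem_filter.mp hj).2
        refine Finset.mem_filter.mpr ⟨Finset.mem_univ _, ?_⟩
        rw [h j hj]; exact hj'
      have himg : Finset.image (fun j => σ j) s = s :=
        Finset.eq_of_subset_of_card_le (Finset.image_subset_iff.mpr hσs)
          (le_of_eq (Finset.card_image_of_injective _ σ.injective).symm)
      have hrw : ∀ ω, mono σ ω = ∏ e ∈ s.image a, X e.1 e.2 ω ^ 2 := by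
        intro ω
        show (∏ j ∈ s, X (ι j) (j:ℕ) ω * X (ι j) ((σ j : Fin m):ℕ) ω) = _
        have hstep : ∀ j ∈ s, X (ι j) (j:ℕ) ω * X (ι j) ((σ j : Fin m):ℕ) ω
            = X (a j).1 (a j).2 ω * X (a (σ j)).1 (a (σ j)).2 ω := by
          intro j hj
          show X (ι j) (j:ℕ) ω * X (ι j) ((σ j : Fin m):ℕ) ω
              = X (ι j) (j:ℕ) ω * X (ι (σ j)) ((σ j : Fin m):ℕ) ω
          rw [hιs j hj]
        rw [Finset.prod_congr rfl hstep, Finset.prod_mul_distrib]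
        have hre : (∏ j ∈ s, X (a (σ j)).1 (a (σ j)).2 ω) = ∏ j ∈ s, X (a j).1 (a j).2 ω := by
          refine Finset.prod_bij (fun j _ => σ j) (fun j hj => hσs j hj)
            (fun x _ y _ h' => σ.injective h') ?_ (fun j hj => rfl)
          intro j hj
          rw [← himg] at hj
          obtain ⟨j', hj', hjj⟩ := Finset.mem_image.mp hj
          exact ⟨j', hj', hjj⟩
        rw [hre, ← Finset.prod_mul_distrib]
        rw [Finset.prod_image (fun x hx y hy hxy => ha hx hy hxy)]
        exact Finset.prod_congr rfl fun j _ => (sq _).symm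
      have hint2 := (prod_moment Q hmean hvar X hmeas hindep hdist
        (fun _ => 2) (fun _ => le_refl 2) (s.image a)).2
      have : (fun ω => mono σ ω) = fun ω => ∏ e ∈ s.image a, X e.1 e.2 ω ^ 2 :=
        funext hrw
      rw [this, hint2]
      simp
    · rw [if_neg h]
      push_neg at h
      obtain ⟨j₀, hj₀, hne⟩ := h
      refine (hmono σ).2 ⟨j₀, hj₀, ?_⟩
      intro j' hj' heq
      have hj'eq : j' = σ j₀ := Fin.val_injective (congrArg Prod.snd heq)
      have h1 : ι j' = ι j₀ := congrArg Prod.fst heq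
      obtain ⟨i', hi', hv'⟩ := hgsome j' hj'
      obtain ⟨i₀, hi₀, hv₀⟩ := hgsome j₀ hj₀
      have hii : i' = i₀ := Fin.val_injective (by rw [hv', hv₀, h1])
      exact hne (by rw [← hj'eq, hi', hii, ← hi₀])
  -- putting it together
  rw [hdet_eq, integral_finset_sum _ (fun σ _ => hint σ)]
  rw [← Matrix.det_transpose (wM lam g), Matrix.det_apply']
  refine Finset.sum_congr rfl fun σ _ => ?_
  have hconst : (fun ω => ((Equiv.Perm.sign σ : ℤ) : ℂ) * ∏ j, rowF X lam ω j (g j) (σ j))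
      = fun ω => (((Equiv.Perm.sign σ : ℤ) : ℂ) * (c1 σ * (-1 : ℂ) ^ s.card))
          * ((mono σ ω : ℝ) : ℂ) := by
    funext ω; rw [hterm σ ω]; ring
  rw [hconst, integral_const_mul]
  rw [show (∫ (ω : Ω), ((mono σ ω : ℝ) : ℂ)) = ((∫ ω, mono σ ω : ℝ) : ℂ) from integral_ofReal,
    hval σ]
  have hW : (∏ j, (wM lam g)ᵀ (σ j) j)
      = c1 σ * ((-1 : ℂ) ^ s.card * (if (∀ j ∈ s, g (σ j) = g j) then (1:ℂ) else 0)) := by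
    simp only [Matrix.transpose_apply]
    rw [← Finset.prod_filter_mul_prod_filter_not Finset.univ (fun j => g j = none)]
    congr 1
    · exact Finset.prod_congr rfl fun j hj => by
        simp [wM, (Finset.mem_filter.mp hj).2]
    · have h1 : ∀ j ∈ s, wM lam g j (σ j) = (-1) * (if g (σ j) = g j then (1:ℂ) else 0) := by
        intro j hj
        have h2 := (Finset.mem_filter.mp hj).2
        simp only [wM, Matrix.of_apply, if_neg h2]
        rw [neg_one_mul]
      rw [Finset.prod_congr rfl h1, Finset.prod_mul_distrib, Finset.prod_const,
        Finset.prod_boole]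
      congr 1
      split_ifs <;> rfl
  rw [hW]
  rw [apply_ite (fun x : ℝ => (x : ℂ))]
  push_cast
  ring

lemma card_good (n m : ℕ) (s : Finset (Fin m)) :
    (univ.filter (fun g : Fin m → Option (Fin n) =>
      (univ.filter fun j => ¬ (g j = none)) = s ∧
        (∀ p p', g p = g p' → g p = none ∨ p = p'))).card
      = n.descFactorial s.card := by
  classical
  rw [← Fintype.card_subtype]
  have hemb : n.descFactorial s.card = Fintype.card (↥s ↪ Fin n) := by
    rw [Fintype.card_embedding_eq, Fintype.card_fin, Fintype.card_coe]
  rw [hemb]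
  · refine Fintype.card_congr ?_
    refine
      { toFun := fun g => ⟨fun j => (g.1 j.1).get (by
          have hj : (j : Fin m) ∈ univ.filter fun j => ¬ (g.1 j = none) := by
            rw [g.2.1]; exact j.2
          have := (Finset.mem_filter.mp hj).2
          exact Option.ne_none_iff_isSome.mp this), ?_⟩
        invFun := fun e => ⟨fun j => if h : j ∈ s then some (e ⟨j, h⟩) else none, ?_, ?_⟩
        left_inv := ?_
        right_inv := ?_ }
    · -- injectivity of toFun image
      intro j j'
      intro h
      have h2 : g.1 j.1 = g.1 j'.1 := by
        have := congrArg some h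
        rwa [Option.some_get, Option.some_get] at this
      rcases g.2.2 j.1 j'.1 h2 with h3 | h3
      · exfalso
        have hj : (j : Fin m) ∈ univ.filter fun j => ¬ (g.1 j = none) := by
          rw [g.2.1]; exact j.2
        exact (Finset.mem_filter.mp hj).2 h3
      · exact Subtype.ext h3
    · -- supp = s
      ext j
      simp only [Finset.mem_filter, Finset.mem_univ, true_and]
      by_cases h : j ∈ s <;> simp [h]
    · -- P property
      intro p p' hpp'
      by_cases hp : p ∈ s
      · by_cases hp' : p' ∈ s
        · simp only [dif_pos hp, dif_pos hp'] at hpp'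
          right
          have := e.injective (Option.some_injective _ hpp')
          exact congrArg Subtype.val this
        · simp only [dif_pos hp, dif_neg hp'] at hpp'
          exact absurd hpp' (Option.some_ne_none _)
      · left; simp only [dif_neg hp]
    · -- left_inv
      intro g
      refine Subtype.ext ?_
      funext j
      by_cases h : j ∈ s
      · simp only [dif_pos h]
        exact Option.some_get _
      · simp only [dif_neg h]
        have hj : j ∉ univ.filter fun j => ¬ (g.1 j = none) := by rw [g.2.1]; exact h
        have := Finset.mem_filter.not.mp hj
        push_neg at this
        exact (this (Finset.mem_univ j)).symm
    · -- right_inv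
      intro e
      refine DFunLike.ext _ _ fun j => ?_
      simp [j.2]

open Finset in
lemma sum_det_wM (lam : ℂ) (n m : ℕ) :
    (∑ g : Fin m → Option (Fin n), (wM lam g).det)
      = ∑ k ∈ range (m+1),
          (m.choose k : ℂ) * (n.descFactorial k : ℂ) * (-1 : ℂ)^k * lam^(m-k) := by
  classical
  have h1 := Finset.sum_fiberwise (univ : Finset (Fin m → Option (Fin n)))
    (fun g => univ.filter fun j => ¬ (g j = none)) (fun g => (wM lam g).det)
  rw [← h1]
  have h2 : ∀ s : Finset (Fin m),
      (∑ g ∈ univ.filter (fun g : Fin m → Option (Fin n) =>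
          (univ.filter fun j => ¬ (g j = none)) = s), (wM lam g).det)
        = (n.descFactorial s.card : ℂ) * ((-1 : ℂ) ^ s.card * lam ^ (m - s.card)) := by
    intro s
    have : ∀ g ∈ univ.filter (fun g : Fin m → Option (Fin n) =>
        (univ.filter fun j => ¬ (g j = none)) = s),
        (wM lam g).det = if (∀ p p', g p = g p' → g p = none ∨ p = p')
          then ((-1 : ℂ) ^ s.card * lam ^ (m - s.card)) else 0 := by
      intro g hg
      have hsupp := (Finset.mem_filter.mp hg).2
      rw [det_wM lam g]
      have hc1 : (univ.filter fun j => ¬ (g j = none)).card = s.card := by rw [hsupp]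
      have hc2 : (univ.filter fun j => g j = none).card = m - s.card := by
        have := Finset.card_filter_add_card_filter_not
          (s := (univ : Finset (Fin m))) (p := fun j => g j = none)
        simp only [Finset.card_univ, Fintype.card_fin] at this
        omega
      rw [hc1, hc2]
      congr 1
      ring
    rw [Finset.sum_congr rfl this, Finset.sum_ite, Finset.sum_const_zero, add_zero,
      Finset.sum_const, Finset.filter_filter, card_good n m s, nsmul_eq_mul]
  rw [Finset.sum_congr rfl (fun s _ => h2 s)]
  have h3 : (univ : Finset (Finset (Fin m))) = (univ : Finset (Fin m)).powerset := by
    rw [Finset.powerset_univ]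
  rw [h3, Finset.sum_powerset]
  simp only [Finset.card_univ, Fintype.card_fin]
  refine Finset.sum_congr rfl fun k hk => ?_
  have : ∀ s ∈ Finset.powersetCard k (univ : Finset (Fin m)),
      (n.descFactorial s.card : ℂ) * ((-1 : ℂ) ^ s.card * lam ^ (m - s.card))
        = (n.descFactorial k : ℂ) * ((-1 : ℂ) ^ k * lam ^ (m - k)) := by
    intro s hs
    rw [(Finset.mem_powersetCard.mp hs).2]
  rw [Finset.sum_congr rfl this, Finset.sum_const, Finset.card_powersetCard,
    Finset.card_univ, Fintype.card_fin, nsmul_eq_mul]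
  push_cast
  ring

lemma laguerre_expand (lam : ℂ) (n m : ℕ) (h : m ≤ n) :
    (∑ k ∈ range (m+1),
        (m.choose k : ℂ) * (n.descFactorial k : ℂ) * (-1 : ℂ)^k * lam^(m-k))
      = (-1)^m * (m.factorial : ℂ) * laguerre m (n - m) lam := by
  rw [laguerre]
  have hn : m + (n - m) = n := Nat.add_sub_cancel' h
  rw [hn, Finset.mul_sum]
  conv_rhs => rw [← Finset.sum_range_reflect]
  refine Finset.sum_congr rfl fun k hk => ?_
  have hkm : k ≤ m := Nat.lt_succ_iff.mp (Finset.mem_range.mp hk)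
  simp only [show m + 1 - 1 - k = m - k from by omega]
  rw [Nat.sub_sub_self hkm, neg_pow]
  have hfac : (((m-k).factorial : ℕ) : ℂ) ≠ 0 := Nat.cast_ne_zero.mpr (Nat.factorial_ne_zero _)
  have hnat : (m.choose k) * n.descFactorial k * (m-k).factorial = m.factorial * n.choose k := by
    rw [Nat.descFactorial_eq_factorial_mul_choose, ← Nat.choose_mul_factorial_mul_factorial hkm]
    ring
  have hcast : (m.choose k : ℂ) * (n.descFactorial k : ℂ) * ((m-k).factorial : ℂ)
      = (m.factorial : ℂ) * (n.choose k : ℂ) := by exact_mod_cast congrArg (Nat.cast (R := ℂ)) hnat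
  have hsign : ((-1 : ℂ))^m * (-1 : ℂ)^(m-k) = (-1 : ℂ)^k := by
    rw [← pow_add, show m + (m - k) = 2*(m-k) + k by omega, pow_add, pow_mul]
    simp
  have hnp : (-lam)^(m-k) = (-1:ℂ)^(m-k) * lam^(m-k) := by rw [neg_pow]
  field_simp
  linear_combination ((-1:ℂ)^k * lam^(m-k)) * hcast
    - ((-1:ℂ))^m * ((m.factorial : ℂ) * (n.choose k : ℂ)) * hnp
    - ((m.factorial : ℂ) * (n.choose k : ℂ) * lam^(m-k)) * hsign

end AuxiliaryLemmas

/-- For `n ≥ m ≥ 0` and `λ ∈ ℂ`, for a real sample covariance matrix,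
`E det(λ I_m − X(n,m)ᵀ X(n,m)) = (−1)^m · m! · L_m^{(n−m)}(λ)`. -/
theorem expected_charpoly_real_sample_covariance
    (Q : Measure ℝ) [IsProbabilityMeasure Q] (b : ℝ)
    (hmean : ∫ x, x ∂Q = 0) (hvar : ∫ x, x ^ 2 ∂Q = 1) (hfourth : ∫ x, x ^ 4 ∂Q = b)
    (Ω : Type) [MeasureSpace Ω] [IsProbabilityMeasure (ℙ : Measure Ω)]
    (X : ℕ → ℕ → Ω → ℝ) (hmeas : ∀ i j, Measurable (X i j))
    (hindep : iIndepFun (m := fun _ : ℕ × ℕ => Real.measurableSpace)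
      (fun p ω => X p.1 p.2 ω) ℙ)
    (hdist : ∀ i j, Measure.map (X i j) ℙ = Q) :
    ∀ n m : ℕ, m ≤ n → ∀ lam : ℂ,
      (∫ ω, (lam • (1 : Matrix (Fin m) (Fin m) ℂ)
          - (entryMatC X n m ω)ᵀ * entryMatC X n m ω).det ∂ℙ)
        = (-1) ^ m * (m.factorial : ℂ) * laguerre m (n - m) lam := by
  intro n m hmn lam
  have hexp : (fun ω : Ω => (lam • (1 : Matrix (Fin m) (Fin m) ℂ)
      - (entryMatC X n m ω)ᵀ * entryMatC X n m ω).det)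
      = fun ω => ∑ g : Fin m → Option (Fin n),
          (Matrix.of fun p q => rowF X lam ω p (g p) q).det :=
    funext fun ω => det_expand_s4 X lam ω
  rw [hexp, integral_finset_sum _
    (fun g _ => (integral_det_g Q hmean hvar X hmeas hindep hdist lam g).1)]
  rw [Finset.sum_congr rfl
    (fun g _ => (integral_det_g Q hmean hvar X hmeas hindep hdist lam g).2)]
  rw [sum_det_wM]
  exact laguerre_expand lam n m hmn
end
end
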